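/- Fix an integer d ≥ 2 and an integer h with |h| ≥ 3, and let f_h(x) = x^d − h x^{d−1} + 1. Label the d complex roots of f_h as r_0, …, r_{d−1} with |r_0| ≥ |r_1| ≥ ⋯ ≥ |r_{d−1}|. Then |r_0|·|r_1|^{d−1} < 1 + 2.2/(|h| − 1.1). -/

import Mathlib

set_option maxHeartbeats 2000000

/-- `r 0, …, r (d-1)` is a listing of the roots (with multiplicity) of `q`,
sorted so that the absolute values are non-increasing. -/
def SortedRoots (d : ℕ) (q : Polynomial ℂ) (r : ℕ → ℂ) : Prop :=
  q.roots = (Multiset.range d).map r ∧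
    ∀ i j : ℕ, i ≤ j → j < d → ‖r j‖ ≤ ‖r i‖

open Polynomial in
/-- For an integer `d ≥ 2` and an integer `h` with `|h| ≥ 3`, labeling
the roots `r_0, …, r_{d-1}` of `x^d - h x^{d-1} + 1` with non-increasing absolute
values, one has `|r_0| |r_1|^{d-1} < 1 + 2.2/(|h| - 1.1)`. -/
theorem trinomial_r0_r1_bound (d : ℕ) (hd : 2 ≤ d) (h : ℤ) (hh : 3 ≤ |h|) (r : ℕ → ℂ)
    (hr : SortedRoots d (X ^ d - C (h : ℂ) * X ^ (d - 1) + 1) r) :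
    ‖r 0‖ * ‖r 1‖ ^ (d - 1) < 1 + 2.2 / (|(h : ℝ)| - 1.1) := by
  obtain ⟨hroots, hsort⟩ := hr
  obtain ⟨m, rfl⟩ : ∃ m, d = m + 2 := ⟨d - 2, by omega⟩
  have hsub : m + 2 - 1 = m + 1 := rfl
  rw [hsub] at hroots ⊢
  set n : ℕ := m + 1 with hndef
  have hn : 1 ≤ n := by omega
  set H : ℝ := |(h : ℝ)| with hHdef
  have hH3 : (3 : ℝ) ≤ H := by
    rw [hHdef, ← Int.cast_abs]; exact_mod_cast hh
  set a : ℕ → ℝ := fun i => ‖r i‖ with ha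
  -- basic polynomial facts
  have hmonic : (X ^ (n+1) - C (h : ℂ) * X ^ n + 1).Monic := by
    have e : (X ^ (n+1) - C (h : ℂ) * X ^ n + 1 : ℂ[X])
        = X ^ (n+1) + (1 - C (h:ℂ) * X ^ n) := by ring
    rw [e]
    apply monic_X_pow_add
    have h1 : (1 : ℂ[X]).degree ≤ (n : WithBot ℕ) := degree_one_le.trans (by simp)
    have h2 : (C (h:ℂ) * X ^ n).degree ≤ (n : WithBot ℕ) := degree_C_mul_X_pow_le _ _
    apply lt_of_le_of_lt (le_trans (degree_sub_le _ _) (max_le h1 h2))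
    exact_mod_cast Nat.lt_succ_self n
  have hc0 : (X ^ (n+1) - C (h : ℂ) * X ^ n + 1).coeff 0 = 1 := by
    simp [coeff_X_pow, coeff_one]
  -- product of absolute values of roots is 1
  have hprod : ∏ i ∈ Finset.range (n+1), a i = 1 := by
    have hsp := (IsAlgClosed.splits _).coeff_zero_eq_prod_roots_of_monic hmonic
    rw [hc0, hroots] at hsp
    have h2 := congrArg (‖·‖) hsp
    simp only [norm_mul, norm_pow, norm_neg, norm_one, one_pow, one_mul] at h2
    rw [show ∏ i ∈ Finset.range (n+1), a i = ‖∏ i ∈ Finset.range (n+1), r i‖ from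
      (norm_prod _ _).symm, Finset.prod_eq_multiset_prod, Finset.range_val]
    exact h2.symm
  -- root equation
  have hkey : ∀ i < n + 1, a i ^ n * ‖r i - (h:ℂ)‖ = 1 := by
    intro i hi
    have hmem : r i ∈ (X ^ (n+1) - C (h : ℂ) * X ^ n + 1).roots := by
      rw [hroots]
      exact Multiset.mem_map_of_mem r (Multiset.mem_range.mpr hi)
    have heval := isRoot_of_mem_roots hmem
    rw [IsRoot.def] at heval
    simp only [eval_add, eval_sub, eval_mul, eval_pow, eval_X, eval_C, eval_one] at heval
    have hkc : (r i) ^ n * (r i - (h:ℂ)) = -1 := by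
      have hps : (r i) ^ (n+1) = (r i)^n * r i := pow_succ _ _
      linear_combination heval + 0 * hps
    have := congrArg (‖·‖) hkc
    rwa [norm_mul, norm_pow, norm_neg, norm_one] at this
  have habsh : ‖((h:ℤ):ℂ)‖ = H := by
    rw [hHdef]; exact_mod_cast Complex.norm_intCast h
  -- triangle inequalities
  have htri1 : ∀ i, ‖r i - (h:ℂ)‖ ≤ a i + H := by
    intro i
    rw [sub_eq_add_neg]
    calc ‖r i + -(h:ℂ)‖ ≤ ‖r i‖ + ‖-(h:ℂ)‖ :=
          norm_add_le (r i) (-(h:ℂ))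
      _ = a i + H := by rw [norm_neg, habsh]
  have htri2 : ∀ i, H - a i ≤ ‖r i - (h:ℂ)‖ := by
    intro i
    have hle : ‖(h:ℂ)‖ - ‖r i‖ ≤ ‖(h:ℂ) - r i‖ :=
      norm_sub_norm_le _ _
    rw [habsh, norm_sub_rev] at hle
    exact hle
  -- lower bound valid for every root
  have hH1p : (0:ℝ) < H + 1 := by linarith
  have hH1 : (0:ℝ) < H - 1 := by linarith
  have hlow : ∀ i < n + 1, 1 / (H + 1) ≤ a i ^ n := by
    intro i hi
    rcases lt_or_ge (a i) 1 with hs | hb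
    · have hw : ‖r i - (h:ℂ)‖ ≤ H + 1 := by
        have := htri1 i; linarith
      rw [div_le_iff₀ hH1p]
      calc (1:ℝ) = a i ^ n * ‖r i - (h:ℂ)‖ := (hkey i hi).symm
        _ ≤ a i ^ n * (H + 1) :=
            mul_le_mul_of_nonneg_left hw (pow_nonneg (norm_nonneg _) n)
    · have h1 : (1:ℝ) ≤ a i ^ n := one_le_pow₀ hb
      have h2 : 1 / (H+1) ≤ 1 := by
        rw [div_le_one hH1p]; linarith
      linarith
  have hup : ∀ i < n + 1, a i < 1 → a i ^ n ≤ 1 / (H - 1) := by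
    intro i hi hs
    have hw : H - 1 ≤ ‖r i - (h:ℂ)‖ := by
      have := htri2 i; linarith
    rw [le_div_iff₀ hH1]
    calc a i ^ n * (H - 1) ≤ a i ^ n * ‖r i - (h:ℂ)‖ :=
          mul_le_mul_of_nonneg_left hw (pow_nonneg (norm_nonneg _) n)
      _ = 1 := hkey i hi
  -- big roots are ≥ H - 1
  have hbig : ∀ i < n + 1, 1 ≤ a i → H - 1 ≤ a i := by
    intro i hi hb
    have h1 : (1:ℝ) ≤ a i ^ n := one_le_pow₀ hb
    have hk := hkey i hi
    have hwpos : 0 ≤ ‖r i - (h:ℂ)‖ := norm_nonneg _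
    have hw1 : ‖r i - (h:ℂ)‖ ≤ 1 := by nlinarith
    have := htri2 i
    linarith
  -- products of n-th powers
  have hprodn : ∏ i ∈ Finset.range (n+1), (a i) ^ n = 1 := by
    rw [Finset.prod_pow, hprod, one_pow]
  have e0 : ∏ i ∈ Finset.range (n+1), (a i)^n
      = (a 0)^n * ∏ i ∈ Finset.Ico 1 (n+1), (a i)^n := by
    rw [Finset.range_eq_Ico]; exact Finset.prod_eq_prod_Ico_succ_bot (by omega) _
  have e1 : ∏ i ∈ Finset.Ico 1 (n+1), (a i)^n
      = (a 1)^n * ∏ i ∈ Finset.Ico 2 (n+1), (a i)^n :=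
    Finset.prod_eq_prod_Ico_succ_bot (by omega) _
  set P2 : ℝ := ∏ i ∈ Finset.Ico 2 (n+1), (a i)^n with hP2def
  have hP2low : (1/(H+1))^m ≤ P2 := by
    have hstep : ∏ _i ∈ Finset.Ico 2 (n+1), (1/(H+1) : ℝ) ≤ P2 :=
      Finset.prod_le_prod (fun i _ => le_of_lt (div_pos one_pos hH1p))
        (fun i hi => hlow i (Finset.mem_Ico.mp hi).2)
    rwa [Finset.prod_const, Nat.card_Ico, show n + 1 - 2 = m from rfl] at hstep
  have hP2pos : (0:ℝ) < P2 :=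
    lt_of_lt_of_le (pow_pos (div_pos one_pos hH1p) m) hP2low
  have hfull : (a 0)^n * ((a 1)^n * P2) = 1 := by
    rw [← e1, ← e0, hprodn]
  have hcancel : ((H+1) * (1/(H+1))) = 1 := by field_simp
  -- Step 1 : a 1 < 1
  have hsmall1 : a 1 < 1 := by
    by_contra hc
    push_neg at hc
    have hb0 : H - 1 ≤ a 0 := hbig 0 (by omega) (le_trans hc (hsort 0 1 (by omega) (by omega)))
    have hb1 : H - 1 ≤ a 1 := hbig 1 (by omega) hc
    have hge : (H-1)^n * ((H-1)^n * (1/(H+1))^m) ≤ 1 := by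
      calc (H-1)^n * ((H-1)^n * (1/(H+1))^m)
          ≤ (a 0)^n * ((a 1)^n * P2) := by
            apply mul_le_mul (pow_le_pow_left₀ hH1.le hb0 n)
            · exact mul_le_mul (pow_le_pow_left₀ hH1.le hb1 n) hP2low
                (pow_nonneg (le_of_lt (div_pos one_pos hH1p)) m)
                (pow_nonneg (by linarith) n)
            · exact mul_nonneg (pow_nonneg (by linarith) n)
                (pow_nonneg (le_of_lt (div_pos one_pos hH1p)) m)
            · exact pow_nonneg (norm_nonneg _) n
        _ = 1 := hfull
    have hsq : (H+1) ≤ (H-1)^2 := by nlinarith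
    have c1 : (H+1)^n ≤ ((H-1)^2)^n := pow_le_pow_left₀ hH1p.le hsq n
    have c2 : ((H-1)^2)^n = (H-1)^n * (H-1)^n := by rw [← pow_mul, ← pow_add, two_mul]
    have cpos : (0:ℝ) < (1/(H+1))^m := pow_pos (div_pos one_pos hH1p) m
    have key : H + 1 ≤ 1 := by
      calc H + 1 = (H+1) * (((H+1) * (1/(H+1)))^m) := by rw [hcancel, one_pow, mul_one]
        _ = (H+1)^(m+1) * (1/(H+1))^m := by rw [mul_pow, ← mul_assoc, ← pow_succ']
        _ = (H+1)^n * (1/(H+1))^m := by rw [hndef]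
        _ ≤ ((H-1)^2)^n * (1/(H+1))^m := mul_le_mul_of_nonneg_right c1 cpos.le
        _ = (H-1)^n * ((H-1)^n * (1/(H+1))^m) := by rw [c2, mul_assoc]
        _ ≤ 1 := hge
    linarith
  -- Step 2 : the main bound
  have h01 : (a 0)^n * (a 1)^n ≤ (H+1)^m := by
    have hx : ((a 0)^n * (a 1)^n) * P2 = 1 := by rw [mul_assoc]; exact hfull
    have hge1 : (1:ℝ) ≤ (H+1)^m * P2 := by
      calc (1:ℝ) = ((H+1) * (1/(H+1)))^m := by rw [hcancel, one_pow]
        _ = (H+1)^m * (1/(H+1))^m := by rw [mul_pow]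
        _ ≤ (H+1)^m * P2 := mul_le_mul_of_nonneg_left hP2low (pow_nonneg hH1p.le m)
    have := mul_le_mul_of_nonneg_right hge1 hP2pos.le
    rw [one_mul] at this
    -- this : P2 ≤ (H+1)^m * P2 * P2  -- not what we want; do division instead
    have hx2 : (a 0)^n * (a 1)^n = 1 / P2 := by
      field_simp at hx ⊢
      linarith [hx]
    rw [hx2, div_le_iff₀ hP2pos]
    calc (1:ℝ) ≤ (H+1)^m * P2 := hge1
      _ = (H+1)^m * P2 := rfl
  have h1n : ((a 1)^n)^m ≤ (1/(H-1))^m :=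
    pow_le_pow_left₀ (pow_nonneg (norm_nonneg _) n) (hup 1 (by omega) hsmall1) m
  set Q : ℝ := a 0 * a 1 ^ n with hQdef
  have hQnonneg : 0 ≤ Q :=
    mul_nonneg (norm_nonneg _) (pow_nonneg (norm_nonneg _) n)
  set R : ℝ := (H+1)/(H-1) with hRdef
  have hR1 : 1 < R := by
    rw [hRdef, one_lt_div hH1]; linarith
  have hQpow : Q^n ≤ R^m := by
    have expand : Q^n = ((a 0)^n * (a 1)^n) * ((a 1)^n)^m := by
      have e2 : ((a 1 : ℝ)^n)^n = (a 1)^n * ((a 1)^n)^m := by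
        conv_lhs => rw [hndef]
        exact pow_succ' _ m
      rw [hQdef, mul_pow, e2, mul_assoc]
    rw [expand]
    calc ((a 0)^n * (a 1)^n) * ((a 1)^n)^m ≤ (H+1)^m * (1/(H-1))^m :=
          mul_le_mul h01 h1n (pow_nonneg (pow_nonneg (norm_nonneg _) n) m)
            (pow_nonneg hH1p.le m)
      _ = ((H+1) * (1/(H-1)))^m := by rw [mul_pow]
      _ = R^m := by rw [mul_one_div, hRdef]
  have hQR : Q < R := by
    by_contra hcon
    push_neg at hcon
    have h1 : R^n ≤ Q^n := pow_le_pow_left₀ (by linarith) hcon n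
    have h2 : R^m < R^n := pow_lt_pow_right₀ hR1 (by omega)
    linarith
  have hfinal : R < 1 + 2.2 / (H - 1.1) := by
    have d2 : (0:ℝ) < H - 1.1 := by linarith
    rw [hRdef, div_lt_iff₀ hH1]
    have key2 : (2:ℝ) < 2.2 / (H - 1.1) * (H - 1) := by
      rw [div_mul_eq_mul_div, lt_div_iff₀ d2]
      linarith
    have expand2 : (1 + 2.2 / (H - 1.1)) * (H - 1)
        = (H - 1) + 2.2 / (H - 1.1) * (H - 1) := by ring
    rw [expand2]
    linarith
  calc ‖r 0‖ * ‖r 1‖ ^ n = Q := rfl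
    _ < R := hQR
    _ < 1 + 2.2 / (H - 1.1) := hfinal
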